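/- For every positive integer x with orbit (x_n) under P, the finite sequence q(x₁), q(x₂), …, q(x_{S(x)}) is strictly decreasing: q(x_{n+1}) < q(x_n) for every n with 1 ≤ n < S(x). -/
import Mathlib


open scoped Classical

/-- The largest element of ℙ*₁ = ℙ* ∪ {1} (prime-powers together with 1) not exceeding `x`. -/
noncomputable def q (x : ℕ) : ℕ :=
  sSup {m : ℕ | (IsPrimePow m ∨ m = 1) ∧ m ≤ x}

/-- The prime-power map. -/
noncomputable def P (x : ℕ) : ℕ :=
  if x = 1 then 1
  else if IsPrimePow x then x / x.minFac
  else x - q x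

/-- The orbit of `x` under `P`: `orbit x 1 = x` and `orbit x (n+1) = P (orbit x n)`. -/
noncomputable def orbit (x n : ℕ) : ℕ := P^[n - 1] x

/-- The transient length `T x = min {n ≥ 1 : x_n = 1}`. -/
noncomputable def T (x : ℕ) : ℕ := sInf {n : ℕ | 1 ≤ n ∧ orbit x n = 1}

/-- The settling time `S x = min {n ≥ 1 : x_n ∈ ℙ*₁}`. -/
noncomputable def S (x : ℕ) : ℕ :=
  sInf {n : ℕ | 1 ≤ n ∧ (IsPrimePow (orbit x n) ∨ orbit x n = 1)}

lemma q_le (z : ℕ) : q z ≤ z := by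
  apply csSup_le'
  rintro m ⟨-, hm⟩
  exact hm

lemma q_mem (z : ℕ) (hz : 1 ≤ z) : (IsPrimePow (q z) ∨ q z = 1) ∧ q z ≤ z := by
  have : BddAbove {m : ℕ | (IsPrimePow m ∨ m = 1) ∧ m ≤ z} := ⟨z, fun m hm => hm.2⟩
  exact Nat.sSup_mem ⟨1, by exact ⟨Or.inr rfl, hz⟩⟩ this

lemma le_q (z m : ℕ) (hm : IsPrimePow m ∨ m = 1) (hmz : m ≤ z) : m ≤ q z :=
  le_csSup ⟨z, fun a ha => ha.2⟩ ⟨hm, hmz⟩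

lemma lt_two_mul_q (y : ℕ) (hy : 2 ≤ y) : y < 2 * q y := by
  have h2 : y / 2 ≠ 0 := by omega
  obtain ⟨p, hp, h1, h2'⟩ := Nat.exists_prime_lt_and_le_two_mul (y / 2) h2
  have hpy : p ≤ y := le_trans h2' (by omega)
  have hq : p ≤ q y := le_q y p (Or.inl hp.isPrimePow) hpy
  omega

lemma q_lt_self (y : ℕ) (hy1 : y ≠ 1) (hy2 : ¬ IsPrimePow y) (hy : 1 ≤ y) : q y < y := by
  rcases lt_or_eq_of_le (q_le y) with h | h
  · exact h
  · exfalso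
    rcases (q_mem y hy).1 with hp | h1
    · rw [h] at hp; exact hy2 hp
    · rw [h] at h1; exact hy1 h1

lemma P_pos {z : ℕ} (hz : 0 < z) : 0 < P z := by
  unfold P
  split_ifs with h1 h2
  · exact one_pos
  · exact Nat.div_pos (Nat.minFac_le hz) (Nat.minFac_pos z)
  · have := q_lt_self z h1 h2 hz
    omega

lemma orbit_pos (x : ℕ) (hx : 0 < x) (n : ℕ) : 0 < orbit x n := by
  unfold orbit
  induction n - 1 with
  | zero => exact hx
  | succ k ih => rw [Function.iterate_succ_apply']; exact P_pos ih

theorem stmt_12 (x : ℕ) (hx : 0 < x) (n : ℕ) (h1 : 1 ≤ n) (h2 : n < S x) :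
    q (orbit x (n + 1)) < q (orbit x n) := by
  set y := orbit x n with hy
  have hn : n ∉ {n : ℕ | 1 ≤ n ∧ (IsPrimePow (orbit x n) ∨ orbit x n = 1)} := by
    intro hn
    have hs : S x ≤ n := Nat.sInf_le hn
    omega
  have hny : ¬ (IsPrimePow y ∨ y = 1) := fun h => hn ⟨h1, h⟩
  have hy1 : y ≠ 1 := fun h => hny (Or.inr h)
  have hy2 : ¬ IsPrimePow y := fun h => hny (Or.inl h)
  have hypos : 0 < y := orbit_pos x hx n
  have hy2' : 2 ≤ y := by omega
  have hsucc : orbit x (n + 1) = P y := by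
    rw [hy]
    unfold orbit
    have : n + 1 - 1 = (n - 1) + 1 := by omega
    rw [this, Function.iterate_succ_apply']
  have hP : P y = y - q y := by
    unfold P
    rw [if_neg hy1, if_neg hy2]
  have hb : y < 2 * q y := lt_two_mul_q y hy2'
  have hql : q y ≤ y := q_le y
  have h3 : y - q y < q y := by omega
  calc q (orbit x (n + 1)) = q (y - q y) := by rw [hsucc, hP]
    _ ≤ y - q y := q_le _
    _ < q y := h3
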